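/- arXiv:1706.01993 — 2 statements merged into one kernel-verified Lean document; each statement's English description precedes it below -/
import Mathlib

section
/- Let τ be a σ-finite measure on a measure space X and let b_1,…,b_d ∈ L²(τ) satisfy ∑_{k=1}^d |b_k| ≠ 0 τ-almost everywhere. Then for Lebesgue-almost every α = (α_1,…,α_d) ∈ ℂ^d, the function ∑_{k=1}^d α_k b_k is nonzero τ-almost everywhere on X. -/
open MeasureTheory

/-- A hyperplane `{α : ∑ α k * c k = 0}` with `c ≠ 0` is Lebesgue-null. -/
lemma hyperplane_null (d : ℕ) (c : Fin d → ℂ) (hc : ∃ k, c k ≠ 0) :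
    volume {α : Fin d → ℂ | ∑ k, α k * c k = 0} = 0 := by
  obtain ⟨k, hk⟩ := hc
  let L : (Fin d → ℂ) →ₗ[ℂ] ℂ :=
    { toFun := fun α => ∑ j, α j * c j
      map_add' := by intro α β; simp [add_mul, Finset.sum_add_distrib]
      map_smul' := by intro m α; simp [Finset.mul_sum, mul_assoc] }
  have hset : {α : Fin d → ℂ | ∑ j, α j * c j = 0} =
      (LinearMap.ker (L.restrictScalars ℝ) : Set (Fin d → ℂ)) := by
    ext α; simp [L, LinearMap.mem_ker]
  rw [hset]
  apply Measure.addHaar_submodule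
  intro h
  have : L (Pi.single k 1) = 0 := by
    have := h ▸ Submodule.mem_top (R := ℝ) (M := Fin d → ℂ) (x := Pi.single k 1)
    simpa [LinearMap.mem_ker] using (h.symm ▸ Submodule.mem_top :
      Pi.single k 1 ∈ LinearMap.ker (L.restrictScalars ℝ))
  simp [L, Finset.sum_eq_single k, Pi.single_apply] at this
  exact hk this

open MeasureTheory in
/-- If `b_1, …, b_d ∈ L²(τ)` (τ σ-finite) satisfy `∑ |b_k| ≠ 0` τ-a.e., then for
Lebesgue-almost every `α ∈ ℂ^d` the combination `∑ α_k b_k` is nonzero τ-a.e. -/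
theorem stmt7 {X : Type*} [MeasurableSpace X] (τ : Measure X) [SigmaFinite τ]
    (d : ℕ) (b : Fin d → X → ℂ)
    (hb2 : ∀ k, MemLp (b k) 2 τ)
    (hne : ∀ᵐ x ∂τ, ∑ k, ‖b k x‖ ≠ 0) :
    ∀ᵐ α ∂(volume : Measure (Fin d → ℂ)),
      ∀ᵐ x ∂τ, ∑ k, α k * b k x ≠ 0 := by
  -- measurable representatives
  set g : Fin d → X → ℂ := fun k => (hb2 k).aestronglyMeasurable.mk (b k) with hg_def
  have hg : ∀ k, Measurable (g k) := fun k =>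
    (hb2 k).aestronglyMeasurable.stronglyMeasurable_mk.measurable
  have hgb : ∀ᵐ x ∂τ, ∀ k, g k x = b k x := by
    rw [MeasureTheory.ae_all_iff]
    exact fun k => ((hb2 k).aestronglyMeasurable.ae_eq_mk).symm
  -- the bad set, as a subset of X × (Fin d → ℂ)
  have hFmeas : Measurable (fun p : X × (Fin d → ℂ) => ∑ k, p.2 k * g k p.1) :=
    Finset.measurable_sum _ fun k _ =>
      ((measurable_pi_apply k).comp measurable_snd).mul ((hg k).comp measurable_fst)
  set S' : Set (X × (Fin d → ℂ)) := {p | ∑ k, p.2 k * g k p.1 = 0} with hS'_def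
  have hS' : MeasurableSet S' := hFmeas (measurableSet_singleton 0)
  -- slices over x are null
  have hslice : ∀ᵐ x ∂τ, volume (Prod.mk x ⁻¹' S') = 0 := by
    filter_upwards [hne, hgb] with x hx hgx
    have hex : ∃ k, g k x ≠ 0 := by
      by_contra h
      push_neg at h
      apply hx
      refine Finset.sum_eq_zero fun k _ => ?_
      rw [← hgx k, h k]
      simp
    have : (Prod.mk x ⁻¹' S') = {α : Fin d → ℂ | ∑ k, α k * g k x = 0} := rfl
    rw [this]
    exact hyperplane_null d (fun k => g k x) hex
  have hprod : (τ.prod volume) S' = 0 := by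
    rw [Measure.measure_prod_null hS']
    exact hslice
  -- swap to get product the other way
  set S : Set ((Fin d → ℂ) × X) := {p | ∑ k, p.1 k * g k p.2 = 0} with hS_def
  have hSmeas : MeasurableSet S :=
    (Finset.measurable_sum _ fun k _ =>
      ((measurable_pi_apply k).comp measurable_fst).mul ((hg k).comp measurable_snd))
      (measurableSet_singleton 0)
  have hswap : ((volume : Measure (Fin d → ℂ)).prod τ) S = 0 := by
    have : Prod.swap ⁻¹' S = S' := rfl
    calc ((volume : Measure (Fin d → ℂ)).prod τ) S
        = (Measure.map Prod.swap (τ.prod volume)) S := by rw [Measure.prod_swap]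
      _ = (τ.prod volume) (Prod.swap ⁻¹' S) := Measure.map_apply measurable_swap hSmeas
      _ = 0 := by rw [this]; exact hprod
  have := (Measure.measure_prod_null hSmeas).mp hswap
  filter_upwards [this] with α hα
  have hτ : τ {x | ∑ k, α k * g k x = 0} = 0 := hα
  have h1 : ∀ᵐ x ∂τ, ∑ k, α k * g k x ≠ 0 := by
    rw [ae_iff]; simpa using hτ
  filter_upwards [h1, hgb] with x hx hgx
  intro h0
  apply hx
  rw [← h0]
  exact Finset.sum_congr rfl fun k _ => by rw [hgx k]
end

section
/- Let U be unitary on H, B : ℂ^d → H an isometry with star-cyclic range (i.e. the closed span of {U^k Ran B : k ∈ ℤ} is H), and Γ a strict contraction on ℂ^d. Then T = U + B(Γ - I)B*U is a completely non-unitary contraction: there is no nonzero reducing subspace of T on which T acts unitarily. -/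
set_option maxHeartbeats 2000000 in
open ContinuousLinearMap in
/-- If `Ran B` is star-cyclic for the unitary `U` and `Γ` is a strict contraction, then
`T = U + B(Γ - I)B*U` is a completely non-unitary contraction: `‖T‖ ≤ 1` and every closed
reducing subspace `G` on which `T` acts unitarily is trivial. -/
theorem stmt10 {H : Type*} [NormedAddCommGroup H] [InnerProductSpace ℂ H] [CompleteSpace H]
    {d : ℕ} (U : H →L[ℂ] H) (hU1 : adjoint U * U = 1) (hU2 : U * adjoint U = 1)
    (B : EuclideanSpace ℂ (Fin d) →L[ℂ] H) (hBiso : ∀ v, ‖B v‖ = ‖v‖)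
    (hcyc : (⨆ n : ℕ, (LinearMap.range (B : EuclideanSpace ℂ (Fin d) →ₗ[ℂ] H)).map ((U ^ n : H →L[ℂ] H) : H →ₗ[ℂ] H) ⊔
        (LinearMap.range (B : EuclideanSpace ℂ (Fin d) →ₗ[ℂ] H)).map (((adjoint U) ^ n : H →L[ℂ] H) : H →ₗ[ℂ] H)).topologicalClosure = ⊤)
    (Γ : EuclideanSpace ℂ (Fin d) →L[ℂ] EuclideanSpace ℂ (Fin d)) (hΓ : ‖Γ‖ < 1) :
    let T := U + B ∘L (Γ - 1) ∘L adjoint B ∘L U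
    ‖T‖ ≤ 1 ∧
    ∀ G : Submodule ℂ H, IsClosed (G : Set H) →
      (∀ x ∈ G, T x ∈ G) → (∀ x ∈ Gᗮ, T x ∈ Gᗮ) →
      (∀ x ∈ G, ‖T x‖ = ‖x‖) → (∀ y ∈ G, ∃ x ∈ G, T x = y) → G = ⊥ := by
  intro T
  -- B is inner-product preserving
  have hBinner : ∀ v w, (inner ℂ (B v) (B w) : ℂ) = inner ℂ v w := fun v w =>
    LinearIsometry.inner_map_map ⟨B.toLinearMap, hBiso⟩ v w
  have hBB : ∀ z, adjoint B (B z) = z := by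
    intro z
    apply ext_inner_right ℂ
    intro w
    rw [adjoint_inner_left, hBinner]
  -- decomposition of T x
  have hT : ∀ x : H, T x = (U x - B (adjoint B (U x))) + B (Γ (adjoint B (U x))) := by
    intro x
    show (U + B ∘L (Γ - 1) ∘L adjoint B ∘L U) x = _
    simp only [add_apply, coe_comp', Function.comp_apply, sub_apply, one_apply, map_sub]
    abel
  have horth : ∀ (y : H) (w : EuclideanSpace ℂ (Fin d)),
      (inner ℂ (y - B (adjoint B y)) (B w) : ℂ) = 0 := by
    intro y w
    rw [← adjoint_inner_left, map_sub, hBB, sub_self, inner_zero_left]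
  have hUnorm : ∀ x : H, ‖U x‖ = ‖x‖ := by
    intro x
    have h1 : (inner ℂ (U x) (U x) : ℂ) = inner ℂ x x := by
      rw [← adjoint_inner_right, ← ContinuousLinearMap.mul_apply, hU1, ContinuousLinearMap.one_apply]
    rw [inner_self_eq_norm_sq_to_K, inner_self_eq_norm_sq_to_K] at h1
    have h2 : ‖U x‖ ^ 2 = ‖x‖ ^ 2 := by exact_mod_cast h1
    nlinarith [norm_nonneg (U x), norm_nonneg x]
  have key : ∀ x : H, ‖T x‖ ^ 2 = ‖U x - B (adjoint B (U x))‖ ^ 2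
      + ‖Γ (adjoint B (U x))‖ ^ 2 := by
    intro x
    have h := norm_add_sq_eq_norm_sq_add_norm_sq_of_inner_eq_zero
      (U x - B (adjoint B (U x))) (B (Γ (adjoint B (U x)))) (horth _ _)
    simp only [← pow_two] at h
    rw [hT x, h, hBiso]
  have hxsq : ∀ x : H, ‖x‖ ^ 2 = ‖U x - B (adjoint B (U x))‖ ^ 2
      + ‖adjoint B (U x)‖ ^ 2 := by
    intro x
    have h := norm_add_sq_eq_norm_sq_add_norm_sq_of_inner_eq_zero
      (U x - B (adjoint B (U x))) (B (adjoint B (U x))) (horth _ _)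
    simp only [← pow_two] at h
    rw [sub_add_cancel, hBiso] at h
    rw [← hUnorm x, h]
  constructor
  · apply opNorm_le_bound T zero_le_one
    intro x
    rw [one_mul]
    have hΓu : ‖Γ (adjoint B (U x))‖ ≤ ‖adjoint B (U x)‖ := by
      calc ‖Γ (adjoint B (U x))‖ ≤ ‖Γ‖ * ‖adjoint B (U x)‖ := le_opNorm _ _
        _ ≤ 1 * ‖adjoint B (U x)‖ := mul_le_mul_of_nonneg_right hΓ.le (norm_nonneg _)
        _ = _ := one_mul _
    have h5 : ‖Γ (adjoint B (U x))‖ ^ 2 ≤ ‖adjoint B (U x)‖ ^ 2 :=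
      pow_le_pow_left₀ (norm_nonneg _) hΓu 2
    have h6 : ‖T x‖ ^ 2 ≤ ‖x‖ ^ 2 := by
      rw [key x, hxsq x]; linarith
    calc ‖T x‖ = Real.sqrt (‖T x‖ ^ 2) := (Real.sqrt_sq (norm_nonneg _)).symm
      _ ≤ Real.sqrt (‖x‖ ^ 2) := Real.sqrt_le_sqrt h6
      _ = ‖x‖ := Real.sqrt_sq (norm_nonneg _)
  · intro G hGclosed hTG _ hiso hsurj
    -- on G, B* U x = 0 and T x = U x
    have hu0 : ∀ x ∈ G, adjoint B (U x) = 0 := by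
      intro x hx
      have h1 := key x
      have h2 := hxsq x
      have h4 : ‖T x‖ ^ 2 = ‖x‖ ^ 2 := by rw [hiso x hx]
      have hle : ‖Γ (adjoint B (U x))‖ ≤ ‖Γ‖ * ‖adjoint B (U x)‖ := le_opNorm _ _
      have h5 : ‖Γ (adjoint B (U x))‖ ^ 2 ≤ (‖Γ‖ * ‖adjoint B (U x)‖) ^ 2 :=
        pow_le_pow_left₀ (norm_nonneg _) hle 2
      have hΓ2 : ‖Γ‖ ^ 2 < 1 := by nlinarith [opNorm_nonneg Γ]
      have h6 : ‖adjoint B (U x)‖ ^ 2 ≤ ‖Γ‖ ^ 2 * ‖adjoint B (U x)‖ ^ 2 := by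
        rw [mul_pow] at h5; linarith
      have h7 : ‖adjoint B (U x)‖ ^ 2 ≤ 0 := by nlinarith [sq_nonneg (‖adjoint B (U x)‖)]
      have h8 : ‖adjoint B (U x)‖ ^ 2 = 0 := le_antisymm h7 (sq_nonneg _)
      exact norm_eq_zero.mp (sq_eq_zero_iff.mp h8)
    have hTU : ∀ x ∈ G, T x = U x := by
      intro x hx
      rw [hT x, hu0 x hx]
      simp only [map_zero, sub_zero, add_zero]
    have hUG : ∀ x ∈ G, U x ∈ G := by
      intro x hx
      have := hTG x hx
      rwa [hTU x hx] at this
    have hU'G : ∀ y ∈ G, adjoint U y ∈ G := by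
      intro y hy
      obtain ⟨x, hxG, hTx⟩ := hsurj y hy
      have hUx : U x = y := by rw [← hTU x hxG]; exact hTx
      have : adjoint U y = x := by
        rw [← hUx, ← ContinuousLinearMap.mul_apply, hU1, ContinuousLinearMap.one_apply]
      rwa [this]
    have hBy : ∀ y ∈ G, adjoint B y = 0 := by
      intro y hy
      have h1 := hu0 (adjoint U y) (hU'G y hy)
      rwa [show U (adjoint U y) = y from by rw [← ContinuousLinearMap.mul_apply, hU2, ContinuousLinearMap.one_apply]] at h1
    have hUn : ∀ n : ℕ, ∀ y ∈ G, (U ^ n) y ∈ G := by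
      intro n
      induction n with
      | zero => intro y hy; simpa using hy
      | succ n ih =>
          intro y hy
          rw [pow_succ, ContinuousLinearMap.mul_apply]
          exact ih _ (hUG y hy)
    have hU'n : ∀ n : ℕ, ∀ y ∈ G, ((adjoint U) ^ n) y ∈ G := by
      intro n
      induction n with
      | zero => intro y hy; simpa using hy
      | succ n ih =>
          intro y hy
          rw [pow_succ, ContinuousLinearMap.mul_apply]
          exact ih _ (hU'G y hy)
    have hadj : ∀ n : ℕ, adjoint ((U : H →L[ℂ] H) ^ n) = (adjoint U) ^ n := by
      intro n
      rw [← star_eq_adjoint, ← star_eq_adjoint, star_pow]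
    have hadj' : ∀ n : ℕ, adjoint (((adjoint U : H →L[ℂ] H)) ^ n) = U ^ n := by
      intro n
      rw [← star_eq_adjoint, ← star_eq_adjoint, star_pow, star_star]
    have hS : (⨆ n : ℕ, (LinearMap.range (B : EuclideanSpace ℂ (Fin d) →ₗ[ℂ] H)).map ((U ^ n : H →L[ℂ] H) : H →ₗ[ℂ] H) ⊔
        (LinearMap.range (B : EuclideanSpace ℂ (Fin d) →ₗ[ℂ] H)).map (((adjoint U) ^ n : H →L[ℂ] H) : H →ₗ[ℂ] H)) ≤ Gᗮ := by
      apply iSup_le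
      intro n
      apply sup_le
      · rintro z hz
        obtain ⟨_, ⟨v, rfl⟩, rfl⟩ := hz
        rw [Submodule.mem_orthogonal]
        intro u hu
        simp only [ContinuousLinearMap.coe_coe]
        rw [← adjoint_inner_left, hadj, ← adjoint_inner_left,
          hBy _ (hU'n n u hu), inner_zero_left]
      · rintro z hz
        obtain ⟨_, ⟨v, rfl⟩, rfl⟩ := hz
        rw [Submodule.mem_orthogonal]
        intro u hu
        simp only [ContinuousLinearMap.coe_coe]
        rw [← adjoint_inner_left, hadj', ← adjoint_inner_left,
          hBy _ (hUn n u hu), inner_zero_left]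
    have hSc : (⊤ : Submodule ℂ H) ≤ Gᗮ := by
      rw [← hcyc]
      exact Submodule.topologicalClosure_minimal _ hS G.isClosed_orthogonal
    have : G ≤ ⊥ := by
      calc G ≤ Gᗮᗮ := Submodule.le_orthogonal_orthogonal G
        _ ≤ (⊤ : Submodule ℂ H)ᗮ := Submodule.orthogonal_le hSc
        _ = ⊥ := Submodule.top_orthogonal_eq_bot
    exact le_bot_iff.mp this
end
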